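/- Let $r,\beta>0$, $\theta\in\mathbb{R}$, $T>0$, $\gamma>0$ with $\gamma\ne1$, $\alpha\in(0,1)$, $\gamma_1:=1-\alpha(1-\gamma)$, $0<L_0<L_1$, $\varepsilon_0>\varepsilon_1\ge0$, and let $\psi_1:[0,T]\to\mathbb{R}$ be continuously differentiable with $\psi_1'(\tau)+r\psi_1(\tau)<\varepsilon_0-\varepsilon_1$ for all $\tau\in[0,T]$. For $\varepsilon>0$ define $\underline{z}(\tau,x):=\min\{(1-\varepsilon)\mathcal{E}(\tau),\psi_1(\tau)\}-\varepsilon^5\big(x-\tfrac{2}{\varepsilon^3}\big)^2\mathbf{1}_{\{x\le 2/\varepsilon^3\}}$. Then there exists $\varepsilon^*>0$ such that for every $\varepsilon\in(0,\varepsilon^*)$ and every $(\tau,x)$ with $0<\tau<T$, $x>1/\varepsilon^3$, $x\ne 2/\varepsilon^3$ and $(1-\varepsilon)\mathcal{E}(\tau)\ne\psi_1(\tau)$, one has $\partial_\tau\underline{z}(\tau,x)-\tfrac{\theta^2}{2}\partial_{xx}\underline{z}(\tau,x)-\big(\beta-r+\tfrac{\theta^2}{2}\big)\partial_x\underline{z}(\tau,x)+r\,\underline{z}(\tau,x)\;\le\;U(x)$.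 -/

import Mathlib

open Real Set

/-- The barrier `z̲(τ,x) = min{(1-ε)𝓔(τ), ψ1(τ)} - ε⁵(x-2/ε³)² 1_{x≤2/ε³}`,
where `𝓔(τ) = (ε0-ε1)(1-e^{-rτ})/r`. -/
noncomputable def zunder (ψ1 : ℝ → ℝ) (r ε0 ε1 ε τ x : ℝ) : ℝ :=
  min ((1 - ε) * ((ε0 - ε1) * (1 - Real.exp (-(r * τ))) / r)) (ψ1 τ)
    - ε ^ 5 * (x - 2 / ε ^ 3) ^ 2 * (if x ≤ 2 / ε ^ 3 then (1:ℝ) else 0)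

lemma hasDerivAt_min_left' {f g : ℝ → ℝ} {τ f' : ℝ} (hf : HasDerivAt f f' τ)
    (hg : ContinuousAt g τ) (h : f τ < g τ) :
    HasDerivAt (fun t => min (f t) (g t)) f' τ :=
  hf.congr_of_eventuallyEq <|
    (hf.continuousAt.eventually_lt hg h).mono fun t ht => min_eq_left ht.le

lemma hasDerivAt_min_right' {f g : ℝ → ℝ} {τ g' : ℝ} (hg : HasDerivAt g g' τ)
    (hf : ContinuousAt f τ) (h : g τ < f τ) :
    HasDerivAt (fun t => min (f t) (g t)) g' τ :=
  hg.congr_of_eventuallyEq <|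
    (hg.continuousAt.eventually_lt hf h).mono fun t ht => min_eq_right ht.le

set_option maxHeartbeats 1000000 in
/-- For all small `ε > 0`, `z̲` is a subsolution
`∂_τ z̲ - (θ²/2) ∂_{xx} z̲ - (β-r+θ²/2) ∂_x z̲ + r z̲ ≤ U(x)`
on `(0,T)×(1/ε³,∞)` away from the kink loci. -/
theorem stmt11 (r β θ T γ α γ1 L0 L1 ε0 ε1 : ℝ) (ψ1 ψ1' : ℝ → ℝ)
    (hr : 0 < r) (hβ : 0 < β) (hT : 0 < T)
    (hγ : 0 < γ) (hγne : γ ≠ 1) (hα : α ∈ Ioo (0:ℝ) 1)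
    (hγ1 : γ1 = 1 - α * (1 - γ)) (hL0 : 0 < L0) (hL : L0 < L1)
    (hε1 : 0 ≤ ε1) (hε : ε1 < ε0)
    (hψ1deriv : ∀ τ ∈ Icc (0:ℝ) T, HasDerivAt ψ1 (ψ1' τ) τ)
    (hψ1cont : ContinuousOn ψ1' (Icc 0 T))
    (hcost : ∀ τ ∈ Icc (0:ℝ) T, ψ1' τ + r * ψ1 τ < ε0 - ε1) :
    ∃ εstar > (0:ℝ), ∀ ε ∈ Ioo (0:ℝ) εstar, ∀ τ x : ℝ,
      0 < τ → τ < T → 1 / ε ^ 3 < x → x ≠ 2 / ε ^ 3 →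
      (1 - ε) * ((ε0 - ε1) * (1 - Real.exp (-(r * τ))) / r) ≠ ψ1 τ →
      deriv (fun t => zunder ψ1 r ε0 ε1 ε t x) τ
        - θ ^ 2 / 2 * deriv (deriv (fun z => zunder ψ1 r ε0 ε1 ε τ z)) x
        - (β - r + θ ^ 2 / 2) * deriv (fun z => zunder ψ1 r ε0 ε1 ε τ z) x
        + r * zunder ψ1 r ε0 ε1 ε τ x
      ≤ (ε0 - ε1) -
          (γ1 / (1 - γ1) * (L1 ^ ((γ1 - γ) / γ1) - L0 ^ ((γ1 - γ) / γ1)))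
            * Real.exp (-x / γ1) := by
  have hα0 := hα.1
  have hα1 := hα.2
  set Δ := ε0 - ε1 with hΔdef
  have hΔ : 0 < Δ := sub_pos.2 hε
  set A := γ1 / (1 - γ1) * (L1 ^ ((γ1 - γ) / γ1) - L0 ^ ((γ1 - γ) / γ1)) with hAdef
  have hγ1pos : 0 < γ1 := by
    rcases lt_or_gt_of_ne hγne with h | h <;> nlinarith
  have hApos : 0 < A := by
    rcases lt_or_gt_of_ne hγne with h | h
    · have hp : 0 < (γ1 - γ) / γ1 := div_pos (by nlinarith) hγ1pos
      have hLp : L0 ^ ((γ1 - γ) / γ1) < L1 ^ ((γ1 - γ) / γ1) :=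
        Real.rpow_lt_rpow hL0.le hL hp
      have h1γ1 : 0 < 1 - γ1 := by nlinarith
      exact mul_pos (div_pos hγ1pos h1γ1) (sub_pos.2 hLp)
    · have hp : (γ1 - γ) / γ1 < 0 := div_neg_of_neg_of_pos (by nlinarith) hγ1pos
      have hLp : L1 ^ ((γ1 - γ) / γ1) < L0 ^ ((γ1 - γ) / γ1) :=
        Real.rpow_lt_rpow_of_neg hL0 hL hp
      have h1γ1 : 1 - γ1 < 0 := by nlinarith
      exact mul_pos_of_neg_of_neg (div_neg_of_pos_of_neg hγ1pos h1γ1)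
        (sub_neg.2 hLp)
  -- continuity of ψ1 on [0,T]
  have hψcont : ContinuousOn ψ1 (Icc 0 T) := fun t ht =>
    (hψ1deriv t ht).continuousAt.continuousWithinAt
  -- a uniform gap δ for the cost inequality
  have hFcont : ContinuousOn (fun t => ψ1' t + r * ψ1 t) (Icc 0 T) :=
    hψ1cont.add (continuousOn_const.mul hψcont)
  obtain ⟨τ0, hτ0mem, hτ0max⟩ :=
    isCompact_Icc.exists_isMaxOn (α := ℝ) ⟨0, le_refl 0, hT.le⟩ hFcont
  set δ := Δ - (ψ1' τ0 + r * ψ1 τ0) with hδdef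
  have hδpos : 0 < δ := sub_pos.2 (hcost τ0 hτ0mem)
  have hbound : ∀ t ∈ Icc (0:ℝ) T, ψ1' t + r * ψ1 t ≤ Δ - δ := by
    intro t ht
    have := hτ0max ht
    simp only [mem_upperBounds] at this
    have h2 : ψ1' t + r * ψ1 t ≤ ψ1' τ0 + r * ψ1 τ0 := this
    simp only [hδdef]; linarith
  set B := β - r + θ ^ 2 / 2 with hBdef
  set C := θ ^ 2 + 2 * |B| + A * γ1 with hCdef
  have hC0 : 0 ≤ C := by
    have := mul_pos hApos hγ1pos
    have := abs_nonneg B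
    nlinarith [sq_nonneg θ]
  have hC1 : 0 < C + 1 := by linarith
  refine ⟨min 1 (min (Δ / (C + 1)) (δ / Δ)), by positivity, ?_⟩
  rintro ε ⟨hε0, hεlt⟩ τ x hτ hτT hx hxne hneq
  have hε1' : ε < 1 := lt_of_lt_of_le hεlt (min_le_left _ _)
  have hεa : ε < Δ / (C + 1) :=
    lt_of_lt_of_le hεlt ((min_le_right _ _).trans (min_le_left _ _))
  have hεb : ε < δ / Δ :=
    lt_of_lt_of_le hεlt ((min_le_right _ _).trans (min_le_right _ _))
  have hεΔδ : ε * Δ ≤ δ := by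
    rw [lt_div_iff₀ hΔ] at hεb; linarith
  have hε3 : (0:ℝ) < ε ^ 3 := by positivity
  have hε5 : (0:ℝ) < ε ^ 5 := by positivity
  have hτIcc : τ ∈ Icc (0:ℝ) T := ⟨hτ.le, hτT.le⟩
  -- quantitative smallness
  have hCε : (θ ^ 2 + 2 * |B| + A * γ1) * ε ^ 2 ≤ ε * Δ := by
    rw [lt_div_iff₀ hC1] at hεa
    rw [hCdef] at hεa
    have h1 := mul_le_mul_of_nonneg_left hεa.le hε0.le
    have h2 := mul_le_mul_of_nonneg_left
      (show θ ^ 2 + 2 * |B| + A * γ1 ≤ θ ^ 2 + 2 * |B| + A * γ1 + 1 by linarith)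
      (sq_nonneg ε)
    nlinarith [h1, h2]
  have hε52 : ε ^ 5 * (1 / ε ^ 3) = ε ^ 2 := by field_simp
  have hε32 : ε ^ 3 ≤ ε ^ 2 := pow_le_pow_of_le_one hε0.le hε1'.le (by norm_num)
  have hε52' : ε ^ 5 ≤ ε ^ 2 := pow_le_pow_of_le_one hε0.le hε1'.le (by norm_num)
  -- the exponential bound
  have hxpos : 0 < x := lt_trans (by positivity) hx
  have hAe : A * Real.exp (-x / γ1) ≤ A * γ1 * ε ^ 2 := by
    have h1 : x / γ1 + 1 ≤ Real.exp (x / γ1) := Real.add_one_le_exp _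
    have hxg : 0 < x / γ1 := div_pos hxpos hγ1pos
    have h2 : Real.exp (-x / γ1) ≤ γ1 / x := by
      rw [neg_div, Real.exp_neg]
      have : γ1 / x = (x / γ1)⁻¹ := (inv_div x γ1).symm
      rw [this]
      exact inv_anti₀ hxg (by linarith)
    have h3 : γ1 / x ≤ γ1 * ε ^ 3 := by
      rw [div_le_iff₀ hxpos]
      have hid : ε ^ 3 * (1 / ε ^ 3) = 1 := by field_simp
      have h5 : (1:ℝ) ≤ ε ^ 3 * x := by
        have h6 := mul_lt_mul_of_pos_left hx hε3
        rw [hid] at h6; exact h6.le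
      have := mul_le_mul_of_nonneg_left h5 hγ1pos.le
      linarith
    have h4 : γ1 * ε ^ 3 ≤ γ1 * ε ^ 2 :=
      mul_le_mul_of_nonneg_left hε32 hγ1pos.le
    have := mul_le_mul_of_nonneg_left ((h2.trans h3).trans h4) hApos.le
    linarith [this]
  -- time derivative computation
  have hexp' : HasDerivAt (fun t : ℝ => Real.exp (-(r * t)))
      (Real.exp (-(r * τ)) * (-r)) τ := by
    have h1 : HasDerivAt (fun t : ℝ => -(r * t)) (-r) τ := by
      simpa using ((hasDerivAt_id τ).const_mul r).fun_neg
    simpa [mul_comm] using h1.exp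
  have hE : HasDerivAt (fun t => (1 - ε) * ((ε0 - ε1) * (1 - Real.exp (-(r * t))) / r))
      ((1 - ε) * ((ε0 - ε1) * (-(Real.exp (-(r * τ)) * (-r))) / r)) τ :=
    (((hexp'.const_sub 1).const_mul (ε0 - ε1)).div_const r).const_mul (1 - ε)
  have hψτ : HasDerivAt ψ1 (ψ1' τ) τ := hψ1deriv τ hτIcc
  set K := ε ^ 5 * (x - 2 / ε ^ 3) ^ 2 * (if x ≤ 2 / ε ^ 3 then (1:ℝ) else 0) with hKdef
  set M := min ((1 - ε) * ((ε0 - ε1) * (1 - Real.exp (-(r * τ))) / r)) (ψ1 τ) with hMdef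
  have hkey : deriv (fun t => zunder ψ1 r ε0 ε1 ε t x) τ + r * M ≤ Δ - ε * Δ := by
    rcases lt_or_gt_of_ne hneq with hlt | hgt
    · have hmin : HasDerivAt (fun t => zunder ψ1 r ε0 ε1 ε t x)
          ((1 - ε) * ((ε0 - ε1) * (-(Real.exp (-(r * τ)) * (-r))) / r)) τ := by
        unfold zunder
        exact (hasDerivAt_min_left' hE hψτ.continuousAt hlt).sub_const _
      rw [hmin.deriv, hMdef, min_eq_left hlt.le]
      have : (1 - ε) * ((ε0 - ε1) * (-(Real.exp (-(r * τ)) * (-r))) / r)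
          + r * ((1 - ε) * ((ε0 - ε1) * (1 - Real.exp (-(r * τ))) / r))
          = (1 - ε) * Δ := by
        rw [hΔdef]; field_simp; ring
      rw [this]; linarith
    · have hmin : HasDerivAt (fun t => zunder ψ1 r ε0 ε1 ε t x) (ψ1' τ) τ := by
        unfold zunder
        exact (hasDerivAt_min_right' hψτ hE.continuousAt hgt).sub_const _
      rw [hmin.deriv, hMdef, min_eq_right hgt.le]
      have := hbound τ hτIcc
      linarith
  -- spatial derivatives, case split
  rcases lt_or_gt_of_ne hxne with hxlt | hxgt
  · -- x < 2/ε³ : quadratic region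
    have hmem : Iio (2 / ε ^ 3) ∈ nhds x := Iio_mem_nhds hxlt
    have hfg : (fun z => zunder ψ1 r ε0 ε1 ε τ z)
        =ᶠ[nhds x] (fun z => M - ε ^ 5 * (z - 2 / ε ^ 3) ^ 2) := by
      filter_upwards [hmem] with z hz
      simp [zunder, (mem_Iio.mp hz).le, hMdef]
    have hg : ∀ z : ℝ, HasDerivAt (fun w => M - ε ^ 5 * (w - 2 / ε ^ 3) ^ 2)
        (-(2 * ε ^ 5) * (z - 2 / ε ^ 3)) z := by
      intro z
      have h : HasDerivAt (fun w => M - ε ^ 5 * (w - 2 / ε ^ 3) ^ 2) _ z := ((((hasDerivAt_id z).sub_const (2 / ε ^ 3)).fun_pow 2).const_mul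
        (ε ^ 5)).const_sub M
      convert h using 1
      norm_num; ring
    have hgd : deriv (fun w => M - ε ^ 5 * (w - 2 / ε ^ 3) ^ 2)
        = fun z => -(2 * ε ^ 5) * (z - 2 / ε ^ 3) := funext fun z => (hg z).deriv
    have hD1 : deriv (fun z => zunder ψ1 r ε0 ε1 ε τ z) x
        = -(2 * ε ^ 5) * (x - 2 / ε ^ 3) := by
      rw [hfg.deriv_eq, (hg x).deriv]
    have hD2 : deriv (deriv (fun z => zunder ψ1 r ε0 ε1 ε τ z)) x
        = -(2 * ε ^ 5) := by
      rw [hfg.deriv.deriv_eq, hgd]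
      have h := ((hasDerivAt_id x).sub_const (2 / ε ^ 3)).const_mul (-(2 * ε ^ 5))
      simpa using h.deriv
    have hval : zunder ψ1 r ε0 ε1 ε τ x = M - ε ^ 5 * (x - 2 / ε ^ 3) ^ 2 := by
      simp [zunder, hxlt.le, hMdef]
    rw [hD1, hD2, hval]
    -- bounds on the spatial error terms
    have hcx : 2 / ε ^ 3 - x ≤ 1 / ε ^ 3 := by
      have : 2 / ε ^ 3 - 1 / ε ^ 3 = 1 / ε ^ 3 := by ring
      linarith
    have hcx0 : 0 < 2 / ε ^ 3 - x := by linarith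
    have hb1 : B * (x - 2 / ε ^ 3) ≤ |B| * (2 / ε ^ 3 - x) := by
      have h1 : B * (x - 2 / ε ^ 3) ≤ |B * (x - 2 / ε ^ 3)| := le_abs_self _
      have h2 : |B * (x - 2 / ε ^ 3)| = |B| * (2 / ε ^ 3 - x) := by
        rw [abs_mul, abs_of_nonpos (by linarith : x - 2 / ε ^ 3 ≤ 0)]
        ring
      linarith
    have hb2 : ε ^ 5 * (2 / ε ^ 3 - x) ≤ ε ^ 2 := by
      have := mul_le_mul_of_nonneg_left hcx hε5.le
      linarith [hε52]
    have hb3 : ε ^ 5 * (B * (x - 2 / ε ^ 3)) ≤ |B| * ε ^ 2 := by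
      have h1 := mul_le_mul_of_nonneg_left hb1 hε5.le
      have h2 := mul_le_mul_of_nonneg_left hb2 (abs_nonneg B)
      linarith [h1, h2]
    have hsq : 0 ≤ r * (ε ^ 5 * (x - 2 / ε ^ 3) ^ 2) := by positivity
    have hθ : θ ^ 2 * ε ^ 5 ≤ θ ^ 2 * ε ^ 2 :=
      mul_le_mul_of_nonneg_left hε52' (sq_nonneg θ)
    -- conclude
    linarith [hkey, hAe, hCε, hb3, hsq, hθ]
  · -- x > 2/ε³ : flat region
    have hmem : Ioi (2 / ε ^ 3) ∈ nhds x := Ioi_mem_nhds hxgt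
    have hfg : (fun z => zunder ψ1 r ε0 ε1 ε τ z) =ᶠ[nhds x] (fun _ => M) := by
      filter_upwards [hmem] with z hz
      simp [zunder, not_le.mpr (mem_Ioi.mp hz), hMdef]
    have hD1 : deriv (fun z => zunder ψ1 r ε0 ε1 ε τ z) x = 0 := by
      rw [hfg.deriv_eq]; simp
    have hD2 : deriv (deriv (fun z => zunder ψ1 r ε0 ε1 ε τ z)) x = 0 := by
      rw [hfg.deriv.deriv_eq]; simp
    have hval : zunder ψ1 r ε0 ε1 ε τ x = M := by
      simp [zunder, not_le.mpr hxgt, hMdef]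
    rw [hD1, hD2, hval]
    have hθ2 : 0 ≤ θ ^ 2 * ε ^ 2 := by positivity
    have habs : 0 ≤ 2 * |B| * ε ^ 2 := by positivity
    linarith [hkey, hAe, hCε, hθ2, habs]
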